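/- Let a, b, r > 0. The pushforward under addition (x, y) ↦ x + y of the product of the gamma distribution with shape a and rate r and the gamma distribution with shape b and rate r equals the gamma distribution with shape a + b and rate r. -/

import Mathlib

open MeasureTheory ProbabilityTheory Real Set
open scoped ENNReal


-- Lemma A: convolution of densities
lemma map_add_withDensity {f g : ℝ → ℝ≥0∞} (hf : Measurable f) (hg : Measurable g) :
    Measure.map (fun p : ℝ × ℝ => p.1 + p.2)
      ((volume.withDensity f).prod (volume.withDensity g))
      = volume.withDensity (fun z => ∫⁻ x, f x * g (z - x)) := by
  have hadd : Measurable fun p : ℝ × ℝ => p.1 + p.2 := measurable_fst.add measurable_snd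
  ext s hs
  rw [Measure.map_apply hadd hs, withDensity_apply _ hs, Measure.prod_apply (hadd hs)]
  have h1 : ∀ x : ℝ, (volume.withDensity g) (Prod.mk x ⁻¹' ((fun p : ℝ × ℝ => p.1 + p.2) ⁻¹' s))
      = ∫⁻ y, s.indicator 1 y * g (y - x) := by
    intro x
    have hxs : MeasurableSet {y : ℝ | x + y ∈ s} := (measurable_const.add measurable_id) hs
    have : Prod.mk x ⁻¹' ((fun p : ℝ × ℝ => p.1 + p.2) ⁻¹' s) = {y : ℝ | x + y ∈ s} := rfl
    rw [this, withDensity_apply _ hxs, ← lintegral_indicator hxs,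
      ← lintegral_add_left_eq_self (fun y => s.indicator 1 y * g (y - x)) x]
    congr 1
    ext y
    by_cases hy : x + y ∈ s <;>
      simp [Set.indicator_apply, hy, add_sub_cancel_left]
  simp_rw [h1]
  have hmeas : Measurable fun x : ℝ => ∫⁻ y, s.indicator 1 y * g (y - x) := by
    apply Measurable.lintegral_prod_right (f := fun (x : ℝ) (y : ℝ) => s.indicator 1 y * g (y - x))
    exact ((measurable_const.indicator hs).comp measurable_snd).mul
      (hg.comp (measurable_snd.sub measurable_fst))
  rw [lintegral_withDensity_eq_lintegral_mul _ hf hmeas]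
  simp only [Pi.mul_apply]
  have hin : ∀ x : ℝ, Measurable fun y : ℝ => s.indicator 1 y * g (y - x) := fun x =>
    (measurable_const.indicator hs).mul (hg.comp (measurable_id.sub measurable_const))
  rw [show (∫⁻ x, f x * ∫⁻ y, s.indicator 1 y * g (y - x))
      = ∫⁻ x, ∫⁻ y, f x * (s.indicator 1 y * g (y - x)) from
    lintegral_congr fun x => (lintegral_const_mul _ (hin x)).symm]
  rw [lintegral_lintegral_swap]
  · have : ∀ y : ℝ, ∫⁻ x, f x * (s.indicator 1 y * g (y - x))
        = s.indicator (fun z => ∫⁻ x, f x * g (z - x)) y := by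
      intro y
      by_cases hy : y ∈ s <;> simp [Set.indicator_apply, hy, mul_comm, mul_left_comm]
    simp_rw [this]
    rw [lintegral_indicator hs]
  · apply Measurable.aemeasurable
    have : Measurable fun p : ℝ × ℝ => f p.1 * (s.indicator 1 p.2 * g (p.2 - p.1)) := by
      refine (hf.comp measurable_fst).mul (Measurable.mul ?_ ?_)
      · exact (measurable_const.indicator hs).comp measurable_snd
      · exact hg.comp (measurable_snd.sub measurable_fst)
    exact this


lemma real_beta_integral {a b z : ℝ} (ha : 0 < a) (hb : 0 < b) (hz : 0 < z) :
    ∫ x in (0:ℝ)..z, x ^ (a - 1) * (z - x) ^ (b - 1)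
      = Gamma a * Gamma b / Gamma (a + b) * z ^ (a + b - 1) := by
  have hc := Complex.betaIntegral_scaled (a : ℂ) (b : ℂ) hz
  have hGG := Complex.Gamma_mul_Gamma_eq_betaIntegral (s := (a : ℂ)) (t := (b : ℂ))
    (by simpa using ha) (by simpa using hb)
  have hGab : Complex.Gamma ((a : ℂ) + b) ≠ 0 := by
    rw [show ((a : ℂ) + b) = ((a + b : ℝ) : ℂ) by push_cast; ring, Complex.Gamma_ofReal]
    exact_mod_cast (Gamma_pos_of_pos (by linarith)).ne'
  have hGab' : ((Gamma (a + b) : ℝ) : ℂ) ≠ 0 := by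
    exact_mod_cast (Gamma_pos_of_pos (show (0:ℝ) < a + b by linarith)).ne'
  have hbeta : Complex.betaIntegral a b = ((Gamma a * Gamma b / Gamma (a + b) : ℝ) : ℂ) := by
    rw [show ((a : ℂ) + b) = ((a + b : ℝ) : ℂ) by push_cast; ring] at hGG
    simp only [Complex.Gamma_ofReal] at hGG
    rw [Complex.ofReal_div, Complex.ofReal_mul, eq_div_iff hGab']
    linear_combination -hGG
  have hlhs : ∫ x in (0:ℝ)..z, ((x ^ (a - 1) * (z - x) ^ (b - 1) : ℝ) : ℂ)
      = ∫ x in (0:ℝ)..z, (x : ℂ) ^ ((a : ℂ) - 1) * ((z : ℂ) - x) ^ ((b : ℂ) - 1) := by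
    refine intervalIntegral.integral_congr fun x hx => ?_
    rw [Set.uIcc_of_le hz.le] at hx
    push_cast
    rw [Complex.ofReal_cpow hx.1, Complex.ofReal_cpow (sub_nonneg.2 hx.2)]
    push_cast
    ring
  rw [← hlhs, intervalIntegral.integral_ofReal, hbeta,
    show ((a : ℂ) + b - 1) = ((a + b - 1 : ℝ) : ℂ) by push_cast; ring,
    ← Complex.ofReal_cpow hz.le, ← Complex.ofReal_mul] at hc
  rw [mul_comm] at hc
  exact_mod_cast hc

lemma beta_intervalIntegrable {a b z : ℝ} (ha : 0 < a) (hb : 0 < b) (hz : 0 < z) :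
    IntervalIntegrable (fun x => x ^ (a - 1) * (z - x) ^ (b - 1)) volume 0 z := by
  have h1 : IntervalIntegrable (fun x => x ^ (a - 1) * (z - x) ^ (b - 1)) volume 0 (z / 2) := by
    apply IntervalIntegrable.mul_continuousOn
    · exact intervalIntegral.intervalIntegrable_rpow' (by linarith)
    · apply ContinuousOn.rpow_const (by fun_prop)
      intro x hx
      rw [Set.uIcc_of_le (by linarith)] at hx
      left
      have := hx.2
      intro h
      nlinarith [hx.1, hx.2]
  have h2 : IntervalIntegrable (fun x => x ^ (a - 1) * (z - x) ^ (b - 1)) volume (z / 2) z := by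
    apply IntervalIntegrable.continuousOn_mul
    · have hbase : IntervalIntegrable (fun x : ℝ => x ^ (b - 1)) volume 0 (z / 2) :=
        intervalIntegral.intervalIntegrable_rpow' (by linarith)
      simpa [show z - z / 2 = z / 2 by ring] using (hbase.comp_sub_left z).symm
    · apply ContinuousOn.rpow_const (by fun_prop)
      intro x hx
      rw [Set.uIcc_of_le (by linarith)] at hx
      left
      nlinarith [hx.1, hx.2]
  exact h1.trans h2


lemma gamma_conv {a b r : ℝ} (ha : 0 < a) (hb : 0 < b) (hr : 0 < r) {z : ℝ} (hz : z ≠ 0) :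
    ∫⁻ x, gammaPDF a r x * gammaPDF b r (z - x) = gammaPDF (a + b) r z := by
  rcases lt_or_gt_of_ne hz with hz | hz
  · rw [gammaPDF_of_neg hz]
    rw [← lintegral_zero (μ := (volume : Measure ℝ))]
    refine lintegral_congr fun x => ?_
    rcases lt_or_ge x 0 with h | h
    · rw [gammaPDF_of_neg h, zero_mul]
    · rw [gammaPDF_of_neg (show z - x < 0 by linarith), mul_zero]
  · set K : ℝ := r ^ a / Gamma a * (r ^ b / Gamma b) * exp (-(r * z)) with hK
    have hKpos : 0 ≤ K := by
      have := Gamma_pos_of_pos ha; have := Gamma_pos_of_pos hb; positivity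
    have hsupp : (fun x => gammaPDF a r x * gammaPDF b r (z - x))
        = (Icc 0 z).indicator (fun x => gammaPDF a r x * gammaPDF b r (z - x)) := by
      refine (Set.indicator_eq_self.mpr ?_).symm
      intro x hx
      simp only [Function.mem_support, ne_eq] at hx
      by_contra hmem
      rw [Set.mem_Icc, not_and_or] at hmem
      rcases hmem with h | h
      · exact hx (by rw [gammaPDF_of_neg (lt_of_not_ge h), zero_mul])
      · exact hx (by rw [gammaPDF_of_neg (show z - x < 0 by
          have := lt_of_not_ge h; linarith), mul_zero])
    rw [hsupp, lintegral_indicator measurableSet_Icc]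
    have hpt : ∀ x ∈ Icc 0 z, gammaPDF a r x * gammaPDF b r (z - x)
        = ENNReal.ofReal (K * (x ^ (a - 1) * (z - x) ^ (b - 1))) := by
      intro x hx
      rw [gammaPDF_of_nonneg hx.1, gammaPDF_of_nonneg (sub_nonneg.2 hx.2),
        ← ENNReal.ofReal_mul (by
          have h1 : (0:ℝ) ≤ x ^ (a - 1) := rpow_nonneg hx.1 _
          have := Gamma_pos_of_pos ha
          positivity)]
      congr 1
      rw [hK]
      calc r ^ a / Gamma a * x ^ (a - 1) * exp (-(r * x)) *
            (r ^ b / Gamma b * (z - x) ^ (b - 1) * exp (-(r * (z - x))))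
          = r ^ a / Gamma a * (r ^ b / Gamma b) * (exp (-(r * x)) * exp (-(r * (z - x)))) *
            (x ^ (a - 1) * (z - x) ^ (b - 1)) := by ring
        _ = _ := by rw [← exp_add, show -(r * x) + -(r * (z - x)) = -(r * z) by ring]
    rw [setLIntegral_congr_fun measurableSet_Icc hpt]
    have hint : IntegrableOn (fun x => K * (x ^ (a - 1) * (z - x) ^ (b - 1))) (Icc 0 z) := by
      have hi0 : IntegrableOn (fun x => x ^ (a - 1) * (z - x) ^ (b - 1)) (Icc 0 z) :=
        (intervalIntegrable_iff_integrableOn_Icc_of_le hz.le).1 (beta_intervalIntegrable ha hb hz)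
      exact hi0.const_mul K
    rw [← ofReal_integral_eq_lintegral_ofReal hint ?nonneg]
    case nonneg =>
      refine (ae_restrict_iff' measurableSet_Icc).2 (ae_of_all _ fun x hx => ?_)
      have h1 : (0:ℝ) ≤ x ^ (a - 1) := rpow_nonneg hx.1 _
      have h2 : (0:ℝ) ≤ (z - x) ^ (b - 1) := rpow_nonneg (by linarith [hx.2]) _
      positivity
    rw [integral_const_mul, integral_Icc_eq_integral_Ioc,
      ← intervalIntegral.integral_of_le hz.le, real_beta_integral ha hb hz]
    rw [gammaPDF_of_nonneg hz.le]
    congr 1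
    have hGa := Gamma_pos_of_pos ha
    have hGb := Gamma_pos_of_pos hb
    have hGab := Gamma_pos_of_pos (show (0:ℝ) < a + b by linarith)
    rw [hK, rpow_add hr]
    field_simp

/-- Summation property of the gamma distribution: the sum of two independent gamma
random variables with shapes `a`, `b` and common rate `r` is gamma with shape `a + b`
and rate `r`. -/
theorem gamma_add_gamma (a b r : ℝ) (ha : 0 < a) (hb : 0 < b) (hr : 0 < r) :
    Measure.map (fun p : ℝ × ℝ => p.1 + p.2) ((gammaMeasure a r).prod (gammaMeasure b r))
      = gammaMeasure (a + b) r := by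
  have hfa : Measurable (gammaPDF a r) := (measurable_gammaPDFReal a r).ennreal_ofReal
  have hfb : Measurable (gammaPDF b r) := (measurable_gammaPDFReal b r).ennreal_ofReal
  rw [gammaMeasure, gammaMeasure, gammaMeasure, map_add_withDensity hfa hfb]
  refine withDensity_congr_ae ?_
  have h0 : ∀ᵐ z : ℝ, z ≠ 0 := by
    rw [ae_iff]
    simp
  filter_upwards [h0] with z hz
  exact gamma_conv ha hb hr hz
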